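/- Let E ⊂ ℝ^N be a set of locally finite perimeter, let ā > 0, and suppose H^{N-1}(∂*E ∩ (−ā/2, ā/2)^N) ≤ (1+2ρ) ā^{N-1} for some ρ ≤ 1/2. Then there exists a ∈ (ā/2, ā) such that H^{N-2}(∂*E ∩ (∂(−a/2,a/2)^{N-1} × (−ā/2, ā/2))) ≤ 2^{N+1} a^{N-2}. -/

import Mathlib

open MeasureTheory Set
open scoped ENNReal NNReal

section HPre
variable {X : Type*} [EMetricSpace X] [MeasurableSpace X] [BorelSpace X]

noncomputable def HPre (d : ℝ) (r : ℝ≥0∞) (s : Set X) : ℝ≥0∞ :=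
  ⨅ (t : ℕ → Set X) (_ : s ⊆ ⋃ n, t n) (_ : ∀ n, EMetric.diam (t n) ≤ r),
    ∑' n, ⨆ _ : (t n).Nonempty, EMetric.diam (t n) ^ d

lemma hausdorffMeasure_eq_iSup_HPre (d : ℝ) (s : Set X) :
    μH[d] s = ⨆ (r : ℝ≥0∞) (_ : 0 < r), HPre d r s := by
  rw [Measure.hausdorffMeasure_apply]; rfl

lemma HPre_le_hausdorffMeasure (d : ℝ) {r : ℝ≥0∞} (hr : 0 < r) (s : Set X) :
    HPre d r s ≤ μH[d] s := by
  rw [hausdorffMeasure_eq_iSup_HPre]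
  exact le_iSup₂ (f := fun r (_ : 0 < r) => HPre d r s) r hr

omit [MeasurableSpace X] [BorelSpace X] in
lemma HPre_anti (d : ℝ) (s : Set X) {r r' : ℝ≥0∞} (h : r ≤ r') :
    HPre d r' s ≤ HPre d r s := by
  refine le_iInf₂ fun t ht => le_iInf fun hdm => ?_
  exact iInf₂_le_of_le t ht (iInf_le_of_le (fun n => (hdm n).trans h) le_rfl)

omit [MeasurableSpace X] [BorelSpace X] in
lemma HPre_le_of_cover (d : ℝ) (r : ℝ≥0∞) (s : Set X) (t : ℕ → Set X)
    (hc : s ⊆ ⋃ n, t n) (hd : ∀ n, EMetric.diam (t n) ≤ r) :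
    HPre d r s ≤ ∑' n, ⨆ _ : (t n).Nonempty, EMetric.diam (t n) ^ d :=
  iInf₂_le_of_le t hc (iInf_le_of_le hd le_rfl)

omit [MeasurableSpace X] [BorelSpace X] in
lemma exists_cover_of_HPre_lt (d : ℝ) (r : ℝ≥0∞) (s : Set X) {C : ℝ≥0∞}
    (h : HPre d r s < C) :
    ∃ t : ℕ → Set X, (s ⊆ ⋃ n, t n) ∧ (∀ n, EMetric.diam (t n) ≤ r) ∧
      ∑' n, ⨆ _ : (t n).Nonempty, EMetric.diam (t n) ^ d < C := by
  simp only [HPre, iInf_lt_iff] at h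
  obtain ⟨t, h1, h2, h3⟩ := h
  exact ⟨t, h1, h2, h3⟩

end HPre

lemma abs_coord_le {m : ℕ} (x : EuclideanSpace ℝ (Fin m)) (i : Fin m) : |x i| ≤ ‖x‖ := by
  rw [EuclideanSpace.norm_eq]
  calc |x i| = Real.sqrt (x i ^ 2) := (Real.sqrt_sq_eq_abs _).symm
    _ ≤ _ := by
        apply Real.sqrt_le_sqrt
        have := Finset.single_le_sum (f := fun j => ‖x j‖ ^ 2)
          (fun j _ => sq_nonneg _) (Finset.mem_univ i)
        simpa [Real.norm_eq_abs, sq_abs] using this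

noncomputable def latf (n : ℕ) (x : EuclideanSpace ℝ (Fin (n+1))) : ℝ :=
  ‖fun i : Fin n => x (Fin.castSucc i)‖

lemma latf_lipschitz (n : ℕ) (x y : EuclideanSpace ℝ (Fin (n+1))) :
    |latf n x - latf n y| ≤ dist x y := by
  have h1 : |latf n x - latf n y| ≤ ‖(fun i : Fin n => x (Fin.castSucc i)) -
      (fun i : Fin n => y (Fin.castSucc i))‖ := abs_norm_sub_norm_le _ _
  refine h1.trans ?_
  rw [dist_eq_norm]
  refine (pi_norm_le_iff_of_nonneg (norm_nonneg _)).2 fun i => ?_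
  have : ((fun i : Fin n => x (Fin.castSucc i)) - fun i : Fin n => y (Fin.castSucc i)) i
      = (x - y) (Fin.castSucc i) := rfl
  rw [Real.norm_eq_abs, this]
  exact abs_coord_le (x - y) _

lemma latf_eq_of_slice (n : ℕ) {x : EuclideanSpace ℝ (Fin (n+1))} {b : ℝ} (hb : 0 ≤ b)
    (h1 : ∀ i, i ≠ Fin.last n → x i ∈ Icc (-b) b)
    (h2 : ∃ i, i ≠ Fin.last n ∧ (x i = -b ∨ x i = b)) : latf n x = b := by
  refine le_antisymm ?_ ?_
  · refine (pi_norm_le_iff_of_nonneg hb).2 fun i => ?_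
    have h := h1 _ (Fin.castSucc_lt_last i).ne
    rw [Real.norm_eq_abs, abs_le]
    exact ⟨h.1, h.2⟩
  · obtain ⟨i, hi, hv⟩ := h2
    obtain ⟨j, rfl⟩ := Fin.exists_castSucc_eq.2 hi
    have : b = |x (Fin.castSucc j)| := by rcases hv with h | h <;> rw [h] <;> simp [abs_of_nonneg hb]
    rw [this]
    exact (norm_le_pi_norm (fun i : Fin n => x (Fin.castSucc i)) j)

lemma latf_mem_interval (n : ℕ) {U : Set (EuclideanSpace ℝ (Fin (n+1)))}
    (hd : EMetric.diam U ≠ ⊤) {x : EuclideanSpace ℝ (Fin (n+1))} (hx : x ∈ U) :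
    latf n x ∈ Icc (sInf (latf n '' U)) (sInf (latf n '' U) + (EMetric.diam U).toReal) := by
  have hdist : ∀ y ∈ U, dist x y ≤ (EMetric.diam U).toReal := fun y hy => by
    rw [dist_edist]
    exact ENNReal.toReal_mono hd (EMetric.edist_le_diam_of_mem hx hy)
  have hbd : BddBelow (latf n '' U) := by
    refine ⟨latf n x - (EMetric.diam U).toReal, fun v hv => ?_⟩
    obtain ⟨y, hy, rfl⟩ := hv
    have h1 := abs_le.1 (latf_lipschitz n x y)
    have h2 := hdist y hy
    linarith [h1.1, h1.2]
  constructor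
  · exact csInf_le hbd ⟨x, hx, rfl⟩
  · have h : latf n x - (EMetric.diam U).toReal ≤ sInf (latf n '' U) := by
      refine le_csInf ⟨latf n x, x, hx, rfl⟩ fun v hv => ?_
      obtain ⟨y, hy, rfl⟩ := hv
      have h1 := abs_le.1 (latf_lipschitz n x y)
      have h2 := hdist y hy
      linarith [h1.1, h1.2]
    linarith

lemma exists_delta_le {r : ℝ≥0∞} (hr : 0 < r) :
    ∃ k : ℕ, ENNReal.ofReal (1/(k+1)) ≤ r := by
  rcases eq_or_ne r ⊤ with h | h
  · exact ⟨0, h ▸ le_top⟩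
  · obtain ⟨k, hk⟩ := exists_nat_one_div_lt (ENNReal.toReal_pos hr.ne' h)
    refine ⟨k, ?_⟩
    rw [← ENNReal.ofReal_toReal h]
    exact ENNReal.ofReal_le_ofReal hk.le

lemma delta_anti {j k : ℕ} (h : j ≤ k) :
    ENNReal.ofReal (1/(k+1)) ≤ ENNReal.ofReal (1/(j+1)) := by
  apply ENNReal.ofReal_le_ofReal
  apply one_div_le_one_div_of_le <;> [positivity; exact_mod_cast by omega]

/-- Selection of the cube side (Step (i) of the proof of Theorem B): if
`H^{N-1}(∂E ∩ (−ā/2, ā/2)^N) ≤ (1+2ρ) ā^{N-1}` (here `N = n+1`), then there is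
`a ∈ (ā/2, ā)` such that the lateral boundary
`∂(−a/2,a/2)^{N-1} × (−ā/2, ā/2)` meets `∂E` in a set of `H^{N-2}`-measure at most
`2^{N+1} a^{N-2}`. -/
theorem cube_side_selection (n : ℕ) (hn : 1 ≤ n)
    (E : Set (EuclideanSpace ℝ (Fin (n + 1))))
    (abar ρ : ℝ) (habar : 0 < abar) (hρ0 : 0 ≤ ρ) (hρ : ρ ≤ 1 / 2)
    (hper : μH[(n : ℝ)]
        (frontier E ∩ {x : EuclideanSpace ℝ (Fin (n + 1)) |
          ∀ i, x i ∈ Ioo (-abar / 2) (abar / 2)})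
      ≤ ENNReal.ofReal ((1 + 2 * ρ) * abar ^ n)) :
    ∃ a ∈ Ioo (abar / 2) abar,
      μH[((n : ℝ) - 1)]
          (frontier E ∩ {x : EuclideanSpace ℝ (Fin (n + 1)) |
            (∀ i, i ≠ Fin.last n → x i ∈ Icc (-a / 2) (a / 2)) ∧
            (∃ i, i ≠ Fin.last n ∧ (x i = -a / 2 ∨ x i = a / 2)) ∧
            x (Fin.last n) ∈ Ioo (-abar / 2) (abar / 2)})
        ≤ ENNReal.ofReal (2 ^ (n + 2) * a ^ (n - 1)) := by
  classical
  obtain ⟨m, rfl⟩ : ∃ m, n = m + 1 := ⟨n - 1, (Nat.succ_pred_eq_of_pos hn).symm⟩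
  by_contra hcon
  push_neg at hcon
  have hd_eq : ((m + 1 : ℕ) : ℝ) - 1 = (m : ℝ) := by push_cast; ring
  simp only [hd_eq, Nat.add_sub_cancel] at hcon
  set S : ℝ → Set (EuclideanSpace ℝ (Fin (m + 1 + 1))) := fun a =>
    frontier E ∩ {x | (∀ i, i ≠ Fin.last (m+1) → x i ∈ Icc (-a / 2) (a / 2)) ∧
      (∃ i, i ≠ Fin.last (m+1) ∧ (x i = -a / 2 ∨ x i = a / 2)) ∧
      x (Fin.last (m+1)) ∈ Ioo (-abar / 2) (abar / 2)} with hSdef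
  set A : Set (EuclideanSpace ℝ (Fin (m + 1 + 1))) :=
    frontier E ∩ {x | ∀ i, x i ∈ Ioo (-abar / 2) (abar / 2)} with hAdef
  have hcon' : ∀ t ∈ Ioo (abar/2) abar,
      ENNReal.ofReal (2 ^ (m + 1 + 2) * t ^ m) < μH[(m : ℝ)] (S t) := hcon
  clear hcon
  have hNcast : ((m + 1 : ℕ) : ℝ) = (m : ℝ) + 1 := by push_cast; ring
  rw [hNcast] at hper
  set d : ℝ := (m : ℝ) with hd
  have hd0 : 0 ≤ d := by positivity
  set p : ℝ := abar ^ m with hp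
  have hp0 : 0 < p := by positivity
  set cR : ℝ := 8 * p with hcR
  have hcR0 : 0 < cR := by positivity
  set c : ℝ≥0∞ := ENNReal.ofReal cR with hc
  set I : Set ℝ := Ioo (abar/4) (abar/2) with hI
  set δ : ℕ → ℝ≥0∞ := fun k => ENNReal.ofReal (1/(k+1)) with hδ
  have hδpos : ∀ k, 0 < δ k := fun k => by
    simp only [hδ]; apply ENNReal.ofReal_pos.2; positivity
  have hδtop : ∀ k, δ k ≠ ⊤ := fun k => ENNReal.ofReal_ne_top
  -- membership facts
  have hslice_in : ∀ t ∈ I, 2*t ∈ Ioo (abar/2) abar := by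
    rintro t ⟨h1, h2⟩; exact ⟨by linarith, by linarith⟩
  have hlat_eq : ∀ t ∈ I, ∀ x ∈ S (2*t), latf (m+1) x = t := by
    rintro t ⟨ht1, ht2⟩ x ⟨-, hx1, hx2, -⟩
    have e1 : -(2*t) / 2 = -t := by ring
    have e2 : (2*t) / 2 = t := by ring
    refine latf_eq_of_slice (m+1) (by linarith) ?_ ?_
    · intro i hi; have := hx1 i hi; rwa [e1, e2] at this
    · obtain ⟨i, hi, hv⟩ := hx2; exact ⟨i, hi, by rwa [e1, e2] at hv⟩
  have hSsubA : ∀ t ∈ I, S (2*t) ⊆ A := by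
    rintro t ⟨ht1, ht2⟩ x ⟨hxf, hx1, hx2, hx3⟩
    refine ⟨hxf, fun i => ?_⟩
    rcases eq_or_ne i (Fin.last (m+1)) with rfl | hi
    · exact hx3
    · obtain ⟨hl, hr⟩ := hx1 i hi
      exact ⟨by rw [neg_div] at hl ⊢; linarith, by linarith⟩
  -- key pointwise existence
  have hkey : ∀ t ∈ I, ∃ j : ℕ, c + δ j ≤ HPre d (δ j) (S (2*t)) := by
    intro t ht
    have hmem := hslice_in t ht
    have hlt : c < μH[d] (S (2*t)) := by
      refine lt_of_le_of_lt ?_ (hcon' _ hmem)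
      apply ENNReal.ofReal_le_ofReal
      have ht4 : abar ≤ 4*t := by have := ht.1; rw [hI, mem_Ioo] at ht; linarith [ht.1]
      have e : (2:ℝ)^(m+1+2) * (2*t)^m = 8 * (4*t)^m := by
        have h4 : (4:ℝ)^m = 2^m * 2^m := by rw [show (4:ℝ) = 2*2 by norm_num, mul_pow]
        rw [show m+1+2 = m+3 by ring, pow_add, mul_pow, mul_pow, h4]
        ring
      rw [e, hcR, hp]
      have := pow_le_pow_left₀ habar.le ht4 m
      nlinarith [this]
    rw [hausdorffMeasure_eq_iSup_HPre, lt_iSup_iff] at hlt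
    obtain ⟨r, hr⟩ := hlt
    rw [lt_iSup_iff] at hr
    obtain ⟨hr0, hlt⟩ := hr
    obtain ⟨k, hk⟩ := exists_delta_le hr0
    have hck : c < HPre d (δ k) (S (2*t)) := hlt.trans_le (HPre_anti d _ hk)
    rcases eq_or_ne (HPre d (δ k) (S (2*t))) ⊤ with htop | htop
    · exact ⟨k, by rw [htop]; exact le_top⟩
    · have hpos : 0 < HPre d (δ k) (S (2*t)) - c := tsub_pos_iff_lt.2 hck
      obtain ⟨j, hj⟩ := exists_delta_le hpos
      refine ⟨max k j, ?_⟩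
      have h1 : c + δ (max k j) ≤ c + δ j := add_le_add_right (delta_anti (le_max_right _ _)) c
      have h2 : c + δ j ≤ HPre d (δ k) (S (2*t)) := by
        calc c + δ j ≤ c + (HPre d (δ k) (S (2*t)) - c) := add_le_add_right hj c
          _ = HPre d (δ k) (S (2*t)) := add_tsub_cancel_of_le hck.le
      exact h1.trans (h2.trans (HPre_anti d _ (delta_anti (le_max_left _ _))))
  set Ej : ℕ → Set ℝ := fun j => {t | t ∈ I ∧ c + δ j ≤ HPre d (δ j) (S (2*t))} with hEj
  set Dk : ℕ → Set ℝ := fun k => {t | t ∈ I ∧ c ≤ HPre d (δ k) (S (2*t))} with hDk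
  have hEmono : Monotone Ej := by
    intro j k hjk t ht
    exact ⟨ht.1, le_trans (add_le_add_right (delta_anti hjk) c)
      (ht.2.trans (HPre_anti d _ (delta_anti hjk)))⟩
  have hDmono : Monotone Dk := by
    intro j k hjk t ht
    exact ⟨ht.1, ht.2.trans (HPre_anti d _ (delta_anti hjk))⟩
  have hEUnion : I ⊆ ⋃ j, Ej j := fun t ht => by
    obtain ⟨j, hj⟩ := hkey t ht
    exact mem_iUnion.2 ⟨j, ht, hj⟩
  have hDUnion : I ⊆ ⋃ k, Dk k := fun t ht => by
    obtain ⟨j, hj⟩ := hkey t ht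
    exact mem_iUnion.2 ⟨j, ht, le_trans (le_add_right le_rfl) hj⟩
  have hvolI : volume I = ENNReal.ofReal (abar/4) := by
    rw [hI, Real.volume_Ioo]; congr 1; ring
  have hwhole : ∀ (T : ℕ → Set ℝ), Monotone T → I ⊆ ⋃ j, T j →
      ∀ b : ℝ, b < abar/4 → ∃ j, ENNReal.ofReal b < volume (T j) := by
    intro T hT hsub b hb
    have h1 : ENNReal.ofReal b < volume (⋃ j, T j) := by
      calc ENNReal.ofReal b < ENNReal.ofReal (abar/4) :=
            (ENNReal.ofReal_lt_ofReal_iff (by positivity)).2 hb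
        _ = volume I := hvolI.symm
        _ ≤ volume (⋃ j, T j) := measure_mono hsub
    rw [hT.measure_iUnion] at h1
    exact lt_iSup_iff.1 h1
  -- choose j0 and k1
  obtain ⟨j0, hj0⟩ := hwhole Ej hEmono hEUnion (abar/8) (by linarith)
  set uR : ℝ := 1/(j0+1) with huR
  have huR0 : 0 < uR := by positivity
  set η : ℝ := min (abar/8) (uR*abar/(128*(p+1))) with hη
  have hη0 : 0 < η := by
    apply lt_min (by linarith)
    positivity
  obtain ⟨k', hk'⟩ := hwhole Dk hDmono hDUnion (abar/4 - η) (by linarith)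
  set k1 : ℕ := max k' j0 with hk1
  have hDk1 : ENNReal.ofReal (abar/4 - η) < volume (Dk k1) :=
    hk'.trans_le (measure_mono (hDmono (le_max_left _ _)))
  set δ1 : ℝ≥0∞ := δ k1 with hδ1
  have hδ1u : δ1 ≤ δ j0 := delta_anti (le_max_right _ _)
  -- the cover
  set P : ℝ≥0∞ := ENNReal.ofReal ((1 + 2 * ρ) * abar ^ (m+1)) with hP
  set ε : ℝ≥0∞ := ENNReal.ofReal (uR*abar/32) with hε
  have hε0 : ε ≠ 0 := by
    simp only [hε, ne_eq, ENNReal.ofReal_eq_zero, not_le]; positivity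
  have hcov : HPre (d+1) δ1 A < P + ε := by
    calc HPre (d+1) δ1 A ≤ μH[d+1] A := HPre_le_hausdorffMeasure _ (hδpos k1) _
      _ ≤ P := hper
      _ < P + ε := ENNReal.lt_add_right (by simp [hP]) hε0
  obtain ⟨U, hUcov, hUdiam, hUsum⟩ := exists_cover_of_HPre_lt _ _ _ hcov
  have hUtop : ∀ j, EMetric.diam (U j) ≠ ⊤ := fun j =>
    ((hUdiam j).trans_lt (lt_top_iff_ne_top.2 (hδtop k1))).ne
  -- interval family
  set J : ℕ → Set ℝ := fun j =>
    if _h : (U j).Nonempty then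
      Icc (sInf (latf (m+1) '' (U j))) (sInf (latf (m+1) '' (U j)) + (EMetric.diam (U j)).toReal)
    else ∅ with hJ
  have hJmeas : ∀ j, MeasurableSet (J j) := fun j => by
    simp only [hJ]; split
    · exact measurableSet_Icc
    · exact MeasurableSet.empty
  have hJvol : ∀ j, volume (J j) ≤ EMetric.diam (U j) := fun j => by
    simp only [hJ]; split
    · rw [Real.volume_Icc, add_sub_cancel_left]
      exact (ENNReal.ofReal_toReal (hUtop j)).le
    · simp
  set g : ℝ → ℝ≥0∞ :=
    fun t => ∑' j, EMetric.diam (U j) ^ d * (J j).indicator (fun _ => (1:ℝ≥0∞)) t with hg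
  have hgmeas : Measurable g := by
    apply Measurable.ennreal_tsum
    intro j
    exact (measurable_const.indicator (hJmeas j)).const_mul _
  have hpoint : ∀ t ∈ I, HPre d δ1 (S (2*t)) ≤ g t := by
    intro t ht
    have hcov2 : S (2*t) ⊆ ⋃ j, U j ∩ S (2*t) := by
      intro x hx
      obtain ⟨j, hj⟩ := mem_iUnion.1 (hUcov (hSsubA t ht hx))
      exact mem_iUnion.2 ⟨j, hj, hx⟩
    refine (HPre_le_of_cover d δ1 _ _ hcov2 (fun j =>
      (EMetric.diam_mono inter_subset_left).trans (hUdiam j))).trans ?_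
    refine ENNReal.tsum_le_tsum fun j => ?_
    by_cases hne : (U j ∩ S (2*t)).Nonempty
    · rw [iSup_pos hne]
      obtain ⟨x, hxU, hxS⟩ := hne
      have hUne : (U j).Nonempty := ⟨x, hxU⟩
      have hmem := latf_mem_interval (m+1) (hUtop j) hxU
      rw [hlat_eq t ht x hxS] at hmem
      have hJj : t ∈ J j := by simp only [hJ, dif_pos hUne]; exact hmem
      rw [indicator_of_mem hJj, mul_one]
      exact ENNReal.rpow_le_rpow (EMetric.diam_mono inter_subset_left) hd0
    · simp [hne]
  have hgint : ∫⁻ t, g t ∂volume ≤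
      ∑' j, ⨆ _ : (U j).Nonempty, EMetric.diam (U j) ^ (d+1) := by
    rw [hg, lintegral_tsum
      (fun j => ((measurable_const.indicator (hJmeas j)).const_mul _).aemeasurable)]
    refine ENNReal.tsum_le_tsum fun j => ?_
    rw [lintegral_const_mul _ (measurable_const.indicator (hJmeas j)),
      lintegral_indicator_const (hJmeas j), one_mul]
    by_cases hne : (U j).Nonempty
    · rw [iSup_pos hne]
      calc EMetric.diam (U j) ^ d * volume (J j)
          ≤ EMetric.diam (U j) ^ d * EMetric.diam (U j) := mul_le_mul_right (hJvol j) _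
        _ ≤ EMetric.diam (U j) ^ (d+1) := by
            rcases eq_or_ne (EMetric.diam (U j)) 0 with h0 | h0
            · simp [h0]
            · rw [ENNReal.rpow_add _ _ h0 (hUtop j), ENNReal.rpow_one]
    · have hUe : U j = ∅ := not_nonempty_iff_eq_empty.1 hne
      simp [hJ, hne, hUe]
  -- Markov-type lower bound
  set G : Set ℝ := {t | c ≤ g t} with hG
  set G' : Set ℝ := {t | c + δ j0 ≤ g t} with hG'
  have hGmeas : MeasurableSet G := measurableSet_le measurable_const hgmeas
  have hG'meas : MeasurableSet G' := measurableSet_le measurable_const hgmeas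
  have hDG : Dk k1 ⊆ G := fun t ht => ht.2.trans (hpoint t ht.1)
  have hEG' : Ej j0 ⊆ G' := fun t ht =>
    le_trans (le_trans ht.2 (HPre_anti d _ hδ1u)) (hpoint t ht.1)
  have hlow : ∀ t, G.indicator (fun _ => c) t + G'.indicator (fun _ => δ j0) t ≤ g t := by
    intro t
    by_cases h1 : t ∈ G'
    · have hcg : c + δ j0 ≤ g t := h1
      have h2 : t ∈ G := le_trans (le_add_right le_rfl) hcg
      rw [indicator_of_mem h2, indicator_of_mem h1]
      exact hcg
    · rw [indicator_of_notMem h1, add_zero]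
      by_cases h2 : t ∈ G
      · rw [indicator_of_mem h2]; exact h2
      · rw [indicator_of_notMem h2]; exact zero_le
  have hmarkov : c * volume G + δ j0 * volume G' ≤ ∫⁻ t, g t ∂volume := by
    have h := lintegral_mono (μ := volume) hlow
    rwa [lintegral_add_left (measurable_const.indicator hGmeas),
      lintegral_indicator_const hGmeas, lintegral_indicator_const hG'meas] at h
  -- the contradiction
  have hfinal1 : c * ENNReal.ofReal (abar/4 - η) + δ j0 * ENNReal.ofReal (abar/8) < P + ε := by
    calc c * ENNReal.ofReal (abar/4 - η) + δ j0 * ENNReal.ofReal (abar/8)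
        ≤ c * volume G + δ j0 * volume G' := by
          refine add_le_add (mul_le_mul_right ?_ c) (mul_le_mul_right ?_ (δ j0))
          · exact hDk1.le.trans (measure_mono hDG)
          · exact hj0.le.trans (measure_mono hEG')
      _ ≤ ∫⁻ t, g t ∂volume := hmarkov
      _ ≤ ∑' j, ⨆ _ : (U j).Nonempty, EMetric.diam (U j) ^ (d+1) := hgint
      _ < P + ε := hUsum
  have hfinal2 : P + ε ≤ c * ENNReal.ofReal (abar/4 - η) + δ j0 * ENNReal.ofReal (abar/8) := by
    have hδj0 : δ j0 = ENNReal.ofReal uR := rfl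
    have hη8 : η ≤ abar/8 := min_le_left _ _
    have hηq : η ≤ uR*abar/(128*(p+1)) := min_le_right _ _
    rw [hδj0, hc, hP, hε, ← ENNReal.ofReal_mul hcR0.le, ← ENNReal.ofReal_mul huR0.le,
      ← ENNReal.ofReal_add (by positivity) (by positivity),
      ← ENNReal.ofReal_add (by nlinarith) (by positivity)]
    apply ENNReal.ofReal_le_ofReal
    have hq0 : 0 < uR*abar/(128*(p+1)) := by positivity
    have hqe : uR*abar/(128*(p+1)) * (128*(p+1)) = uR*abar := by field_simp
    have hpow : abar ^ (m+1) = p * abar := by rw [hp, pow_succ]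
    rw [hpow, hcR]
    nlinarith [mul_le_mul_of_nonneg_left hηq (by positivity : (0:ℝ) ≤ 8*p),
      mul_pos hp0 habar, mul_pos huR0 habar, hqe, hq0,
      mul_le_mul_of_nonneg_right (min_le_right (abar/8) (uR*abar/(128*(p+1)))) hp0.le]
  exact absurd (hfinal1.trans_le hfinal2) (lt_irrefl _)
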